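/- Let π be an indecomposable permutation, G = G_π with sink s, and T a spanning tree of G rooted at s. Define for each vertex i: λ_i = |N_G(i) ∩ T^{(>h(i))}|, μ_i = |N_G(i) ∩ T^{(h(i))}|, ν_i = |N_G(i) ∩ T^{(h(i)−1)} ∩ [0, p(i)−1]|, and c_i(T) = λ_i + μ_i + ν_i. Then the configuration c(T) is recurrent on (G, s). -/

import Mathlib

open Finset
open scoped Classical

def permGraph {n : ℕ} (π : Equiv.Perm (Fin n)) : SimpleGraph (Fin n) :=
  SimpleGraph.fromRel (fun i j => i < j ∧ π.symm j < π.symm i)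

def IsIndecomposable {n : ℕ} (π : Equiv.Perm (Fin n)) : Prop :=
  ∀ k : ℕ, 0 < k → k < n → ¬ (∀ i : Fin n, (i : ℕ) < k → ((π i : ℕ) < k))

noncomputable def topple {n : ℕ} (G : SimpleGraph (Fin n)) (c : Fin n → ℕ) (i : Fin n) :
    Fin n → ℕ :=
  fun j => if j = i then c j - G.degree i else c j + (if G.Adj i j then 1 else 0)

noncomputable def toppleList {n : ℕ} (G : SimpleGraph (Fin n)) (c : Fin n → ℕ) :
    List (Fin n) → (Fin n → ℕ)
  | [] => c
  | i :: l => toppleList G (topple G c i) l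

def ValidTopplings {n : ℕ} (G : SimpleGraph (Fin n)) (c : Fin n → ℕ) :
    List (Fin n) → Prop
  | [] => True
  | i :: l => G.degree i ≤ c i ∧ ValidTopplings G (topple G c i) l

def IsRecurrent {n : ℕ} (G : SimpleGraph (Fin n)) (s : Fin n) (c : Fin n → ℕ) : Prop :=
  c s = G.degree s ∧ (∀ i, i ≠ s → c i < G.degree i) ∧
    ∃ l : List (Fin n), l.head? = some s ∧ l.Nodup ∧ (∀ v, v ∈ l) ∧
      ValidTopplings G c l ∧ toppleList G c l = c

/-- `λ i`: number of neighbors of `i` in `G` whose height in `T` (distance to the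
root `s`) is strictly greater than that of `i`. -/
noncomputable def lamStat {n : ℕ} (G T : SimpleGraph (Fin n)) (s i : Fin n) : ℕ :=
  (Finset.univ.filter fun j => G.Adj i j ∧ T.dist s i < T.dist s j).card

/-- `μ i`: number of neighbors of `i` in `G` at the same height in `T` as `i`. -/
noncomputable def muStat {n : ℕ} (G T : SimpleGraph (Fin n)) (s i : Fin n) : ℕ :=
  (Finset.univ.filter fun j => G.Adj i j ∧ T.dist s j = T.dist s i).card

/-- `ν i`: number of neighbors `j` of `i` in `G` at height `h(i) - 1` in `T` with
`j < p(i)`, where `p(i)` is the parent of `i` in `T` rooted at `s` (characterized as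
the unique `T`-neighbor `q` of `i` at height `h(i) - 1`). -/
noncomputable def nuStat {n : ℕ} (G T : SimpleGraph (Fin n)) (s i : Fin n) : ℕ :=
  (Finset.univ.filter fun j => G.Adj i j ∧ T.dist s j + 1 = T.dist s i ∧
    ∃ q : Fin n, T.Adj i q ∧ T.dist s q + 1 = T.dist s i ∧ j < q).card

/-- The configuration associated with a spanning tree `T` of `G` rooted at `s`. -/
noncomputable def treeConfig {n : ℕ} (G T : SimpleGraph (Fin n)) (s : Fin n) :
    Fin n → ℕ :=
  fun i => lamStat G T s i + muStat G T s i + nuStat G T s i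

section Aux


variable {n : ℕ}

noncomputable def nkey (T : SimpleGraph (Fin n)) (s i : Fin n) : ℕ :=
  T.dist s i * n + i.val

lemma nkey_inj (T : SimpleGraph (Fin n)) (s : Fin n) {i j : Fin n}
    (h : nkey T s i = nkey T s j) : i = j := by
  have hi := i.isLt
  have hj := j.isLt
  have h1 : nkey T s i % n = i.val := by
    rw [nkey, Nat.add_comm, Nat.add_mul_mod_self_right, Nat.mod_eq_of_lt hi]
  have h2 : nkey T s j % n = j.val := by
    rw [nkey, Nat.add_comm, Nat.add_mul_mod_self_right, Nat.mod_eq_of_lt hj]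
  exact Fin.ext (by rw [← h1, ← h2, h])

lemma nkey_lt_of_dist_lt (T : SimpleGraph (Fin n)) (s : Fin n) {i j : Fin n}
    (h : T.dist s i < T.dist s j) : nkey T s i < nkey T s j := by
  have hi := i.isLt
  unfold nkey
  calc T.dist s i * n + i.val < T.dist s i * n + n := by omega
  _ = (T.dist s i + 1) * n := by ring
  _ ≤ T.dist s j * n := Nat.mul_le_mul_right n h
  _ ≤ T.dist s j * n + j.val := Nat.le_add_right _ _

lemma dist_le_of_nkey_le (T : SimpleGraph (Fin n)) (s : Fin n) {i j : Fin n}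
    (h : nkey T s i ≤ nkey T s j) : T.dist s i ≤ T.dist s j := by
  by_contra hlt
  exact absurd h (not_le.mpr (nkey_lt_of_dist_lt T s (not_le.mp hlt)))

lemma exists_parent (T : SimpleGraph (Fin n)) (s i : Fin n) (hc : T.Connected)
    (hne : i ≠ s) : ∃ q, T.Adj i q ∧ T.dist s q + 1 = T.dist s i := by
  have hd : T.dist s i ≠ 0 := by
    rw [SimpleGraph.dist_ne_zero_iff_ne_and_reachable]
    exact ⟨Ne.symm hne, hc.preconnected s i⟩
  obtain ⟨p, hp⟩ := SimpleGraph.exists_walk_of_dist_ne_zero hd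
  have hpr : p.reverse.length = T.dist s i := by
    rw [SimpleGraph.Walk.length_reverse]; exact hp
  cases hq : p.reverse with
  | nil => exact absurd rfl hne
  | cons h q =>
      rename_i b
      refine ⟨b, h, ?_⟩
      rw [hq] at hpr
      simp only [SimpleGraph.Walk.length_cons] at hpr
      have h1 : T.dist s b ≤ q.length := by
        have := SimpleGraph.dist_le q
        rwa [SimpleGraph.dist_comm] at this
      have h2 : T.dist s i ≤ T.dist s b + 1 := by
        have ht := hc.dist_triangle (u := s) (v := b) (w := i)
        have hd1 : T.dist b i = 1 := SimpleGraph.dist_eq_one_iff_adj.mpr h.symm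
        omega
      omega


variable (G T : SimpleGraph (Fin n)) (s : Fin n)

lemma degree_eq_card_filter (i : Fin n) :
    G.degree i = (univ.filter fun j => G.Adj i j).card := by
  show (G.neighborFinset i).card = _
  congr 1
  ext j
  simp [SimpleGraph.mem_neighborFinset]

/-- Degree splits by height trichotomy. -/
lemma deg_split (i : Fin n) :
    G.degree i = lamStat G T s i + muStat G T s i +
      (univ.filter fun j => G.Adj i j ∧ T.dist s j < T.dist s i).card := by
  have h1 := Finset.card_filter_add_card_filter_not
    (s := univ.filter fun j => G.Adj i j) (p := fun j => T.dist s i < T.dist s j)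
  rw [Finset.filter_filter, Finset.filter_filter] at h1
  have h2 := Finset.card_filter_add_card_filter_not
    (s := univ.filter fun j => G.Adj i j ∧ ¬ T.dist s i < T.dist s j)
    (p := fun j => T.dist s j = T.dist s i)
  rw [Finset.filter_filter, Finset.filter_filter] at h2
  have e1 : (univ.filter fun j => (G.Adj i j ∧ ¬ T.dist s i < T.dist s j) ∧
      T.dist s j = T.dist s i) = univ.filter fun j => G.Adj i j ∧ T.dist s j = T.dist s i := by
    apply Finset.filter_congr
    intro x _
    constructor
    · rintro ⟨⟨h, _⟩, h2⟩; exact ⟨h, h2⟩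
    · rintro ⟨h, h2⟩; exact ⟨⟨h, by omega⟩, h2⟩
  have e2 : (univ.filter fun j => (G.Adj i j ∧ ¬ T.dist s i < T.dist s j) ∧
      ¬ T.dist s j = T.dist s i) = univ.filter fun j => G.Adj i j ∧ T.dist s j < T.dist s i := by
    apply Finset.filter_congr
    intro x _
    constructor
    · rintro ⟨⟨h, h1⟩, h2⟩; exact ⟨h, by omega⟩
    · rintro ⟨h, h2⟩; exact ⟨⟨h, by omega⟩, by omega⟩
  rw [e1, e2] at h2
  rw [degree_eq_card_filter, lamStat, muStat]
  omega

noncomputable def nb (S : Finset (Fin n)) (i : Fin n) : ℕ :=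
  (S.filter fun j => G.Adj i j).card

/-- If all strictly-lower-height neighbors are in `S`, the chips suffice. -/
lemma star_bound (S : Finset (Fin n)) (i : Fin n)
    (hS : ∀ x, G.Adj i x → T.dist s x < T.dist s i → x ∈ S) :
    G.degree i ≤ treeConfig G T s i + nb G S i := by
  have hsub' : (univ.filter fun j => G.Adj i j ∧ T.dist s j < T.dist s i) ⊆
      S.filter fun j => G.Adj i j := by
    intro x hx
    rw [Finset.mem_filter] at hx ⊢
    exact ⟨hS x hx.2.1 hx.2.2, hx.2.1⟩
  have hcard := Finset.card_le_card hsub'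
  rw [deg_split G T s i]
  unfold treeConfig nb at *
  omega

/-- At the sink the configuration equals the degree. -/
lemma tc_sink (hc : T.Connected) : treeConfig G T s s = G.degree s := by
  have hlam : lamStat G T s s = (univ.filter fun j => G.Adj s j).card := by
    rw [lamStat]
    apply congrArg
    apply Finset.filter_congr
    intro x _
    simp only [SimpleGraph.dist_self]
    constructor
    · rintro ⟨h, _⟩; exact h
    · intro h; exact ⟨h, hc.pos_dist_of_ne (G.ne_of_adj h)⟩
  have hmu : muStat G T s s = 0 := by
    rw [muStat, Finset.card_eq_zero]
    apply Finset.filter_eq_empty_iff.mpr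
    intro x _
    rintro ⟨hadj, hd⟩
    rw [SimpleGraph.dist_self] at hd
    exact G.ne_of_adj hadj ((hc.dist_eq_zero_iff).mp hd)
  have hnu : nuStat G T s s = 0 := by
    rw [nuStat, Finset.card_eq_zero]
    apply Finset.filter_eq_empty_iff.mpr
    intro x _
    rintro ⟨_, hd, _⟩
    rw [SimpleGraph.dist_self] at hd
    omega
  rw [treeConfig, hlam, hmu, hnu, degree_eq_card_filter]
  omega

/-- Away from the sink the configuration is strictly below the degree. -/
lemma tc_lt (hsub : T ≤ G) (hc : T.Connected) (i : Fin n) (hi : i ≠ s) :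
    treeConfig G T s i < G.degree i := by
  obtain ⟨q0, hq0a, hq0d⟩ := exists_parent T s i hc hi
  set Q : Finset (Fin n) :=
    univ.filter fun q => T.Adj i q ∧ T.dist s q + 1 = T.dist s i with hQ
  have hQne : Q.Nonempty := ⟨q0, by rw [hQ, Finset.mem_filter]; exact ⟨mem_univ _, hq0a, hq0d⟩⟩
  set qm := Q.max' hQne with hqm
  have hqmQ : qm ∈ Q := Q.max'_mem hQne
  rw [hQ, Finset.mem_filter] at hqmQ
  set D : Finset (Fin n) :=
    univ.filter fun j => G.Adj i j ∧ T.dist s j + 1 = T.dist s i with hD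
  have hqmD : qm ∈ D := by
    rw [hD, Finset.mem_filter]
    exact ⟨mem_univ _, hsub hqmQ.2.1, hqmQ.2.2⟩
  have hnusub : (univ.filter fun j => G.Adj i j ∧ T.dist s j + 1 = T.dist s i ∧
      ∃ q : Fin n, T.Adj i q ∧ T.dist s q + 1 = T.dist s i ∧ j < q) ⊆ D.erase qm := by
    intro x hx
    rw [Finset.mem_filter] at hx
    obtain ⟨_, hadj, hd, q, hqa, hqd, hlt⟩ := hx
    have hqQ : q ∈ Q := by rw [hQ, Finset.mem_filter]; exact ⟨mem_univ _, hqa, hqd⟩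
    have hqle : q ≤ qm := Q.le_max' q hqQ
    refine Finset.mem_erase.mpr ⟨?_, ?_⟩
    · exact ne_of_lt (lt_of_lt_of_le hlt hqle)
    · rw [hD, Finset.mem_filter]; exact ⟨mem_univ _, hadj, hd⟩
  have hnu : nuStat G T s i < D.card := by
    have h1 : nuStat G T s i ≤ (D.erase qm).card := Finset.card_le_card hnusub
    have h2 : (D.erase qm).card < D.card :=
      Finset.card_erase_lt_of_mem hqmD
    omega
  have hDsub : D ⊆ univ.filter fun j => G.Adj i j ∧ T.dist s j < T.dist s i := by
    intro x hx
    rw [hD, Finset.mem_filter] at hx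
    rw [Finset.mem_filter]
    exact ⟨mem_univ _, hx.2.1, by omega⟩
  have hcard := Finset.card_le_card hDsub
  rw [deg_split G T s i, treeConfig]
  omega

noncomputable def gcfg (S : Finset (Fin n)) : Fin n → ℕ :=
  fun i => if i ∈ S then treeConfig G T s i + nb G S i - G.degree i
    else treeConfig G T s i + nb G S i

lemma nb_insert (S : Finset (Fin n)) (i j : Fin n) (hiS : i ∉ S) :
    nb G (insert i S) j = nb G S j + (if G.Adj j i then 1 else 0) := by
  unfold nb
  rw [Finset.filter_insert]
  split_ifs with h
  · rw [Finset.card_insert_of_notMem (fun hmem => hiS (Finset.mem_of_mem_filter i hmem))]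
  · omega

lemma main_ind (hsub : T ≤ G) :
    ∀ (l : List (Fin n)) (S : Finset (Fin n)),
      List.Pairwise (fun a b => nkey T s a ≤ nkey T s b) l → l.Nodup →
      (∀ x ∈ S, ∀ y ∈ l, nkey T s x < nkey T s y) →
      (∀ x, x ∉ S → x ∈ l) →
      ValidTopplings G (gcfg G T s S) l ∧
        toppleList G (gcfg G T s S) l = gcfg G T s Finset.univ := by
  intro l
  induction l with
  | nil =>
      intro S _ _ _ hcov
      have hSuniv : S = Finset.univ := by
        apply Finset.eq_univ_iff_forall.mpr
        intro x
        by_contra hx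
        simpa using hcov x hx
      rw [hSuniv]
      exact ⟨trivial, rfl⟩
  | cons i l ih =>
      intro S hsort hnd hkey hcov
      have hiS : i ∉ S := fun h => lt_irrefl _ (hkey i h i (List.mem_cons_self))
      have hil : i ∉ l := (List.nodup_cons.mp hnd).1
      have hsort' : List.Pairwise (fun a b => nkey T s a ≤ nkey T s b) l :=
        hsort.of_cons
      have hrel : ∀ y ∈ l, nkey T s i ≤ nkey T s y :=
        fun y hy => List.rel_of_pairwise_cons hsort hy
      -- all lower-height G-neighbors of i are in S
      have hstar : ∀ x, G.Adj i x → T.dist s x < T.dist s i → x ∈ S := by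
        intro x hax hdx
        by_contra hxS
        have hxl : x ∈ i :: l := hcov x hxS
        have hkx : nkey T s x < nkey T s i := nkey_lt_of_dist_lt T s hdx
        rcases List.mem_cons.mp hxl with h | h
        · subst h; omega
        · exact absurd (hrel x h) (by omega)
      have hvalid : G.degree i ≤ gcfg G T s S i := by
        rw [gcfg, if_neg hiS]
        exact star_bound G T s S i hstar
      -- all members of S have enough chips too
      have hSok : ∀ j ∈ S, G.degree j ≤ treeConfig G T s j + nb G S j := by
        intro j hjS
        apply star_bound G T s S j
        intro x hax hdx
        by_contra hxS
        have hxl : x ∈ i :: l := hcov x hxS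
        have hkx : nkey T s x < nkey T s j := nkey_lt_of_dist_lt T s hdx
        exact absurd (hkey j hjS x hxl) (by omega)
      -- toppling i moves from S to insert i S
      have hstep : topple G (gcfg G T s S) i = gcfg G T s (insert i S) := by
        funext j
        by_cases hji : j = i
        · subst hji
          rw [topple]
          rw [if_pos rfl, gcfg, if_neg hiS, gcfg, if_pos (Finset.mem_insert_self j S),
            nb_insert G S j j hiS, if_neg (G.irrefl)]
          omega
        · rw [topple]
          simp only [if_neg hji]
          have hadj : G.Adj i j ↔ G.Adj j i := G.adj_comm i j
          by_cases hjS : j ∈ S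
          · have hle := hSok j hjS
            rw [gcfg, if_pos hjS, gcfg, if_pos (Finset.mem_insert_of_mem hjS),
              nb_insert G S i j hiS]
            by_cases ha : G.Adj i j
            · rw [if_pos ha, if_pos ha.symm]; omega
            · rw [if_neg ha, if_neg (fun h => ha h.symm)]; omega
          · have hjmem : j ∉ insert i S := by
              intro hmem
              rcases Finset.mem_insert.mp hmem with h | h
              exacts [hji h, hjS h]
            rw [gcfg, if_neg hjS, gcfg, if_neg hjmem, nb_insert G S i j hiS]
            by_cases ha : G.Adj i j
            · rw [if_pos ha, if_pos ha.symm]; omega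
            · rw [if_neg ha, if_neg (fun h => ha h.symm)]; omega
      have hkey' : ∀ x ∈ insert i S, ∀ y ∈ l, nkey T s x < nkey T s y := by
        intro x hx y hy
        rcases Finset.mem_insert.mp hx with h | h
        · subst h
          have h1 := hrel y hy
          have h2 : x ≠ y := fun he => hil (he ▸ hy)
          have h3 : nkey T s x ≠ nkey T s y := fun he => h2 (nkey_inj T s he)
          omega
        · exact hkey x h y (List.mem_cons_of_mem i hy)
      have hcov' : ∀ x, x ∉ insert i S → x ∈ l := by
        intro x hx
        have h1 : x ∉ S := fun h => hx (Finset.mem_insert_of_mem h)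
        have h2 : x ≠ i := fun h => hx (h ▸ Finset.mem_insert_self i S)
        rcases List.mem_cons.mp (hcov x h1) with h | h
        · exact absurd h h2
        · exact h
      obtain ⟨hv, ht⟩ := ih (insert i S) hsort' (List.nodup_cons.mp hnd).2 hkey' hcov'
      constructor
      · exact ⟨hvalid, by rw [hstep]; exact hv⟩
      · show toppleList G (topple G (gcfg G T s S) i) l = _
        rw [hstep]
        exact ht

end Aux

/-- for an indecomposable permutation `π` and a spanning tree `T` of
`G = G_π` rooted at the sink `s`, the configuration `c(T)` with
`c_i = λ_i + μ_i + ν_i` is recurrent on `(G, s)`. -/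
theorem treeConfig_isRecurrent {n : ℕ} (π : Equiv.Perm (Fin n))
    (hπ : IsIndecomposable π) (s : Fin n) (T : SimpleGraph (Fin n))
    (hsub : T ≤ permGraph π) (htree : T.IsTree) :
    IsRecurrent (permGraph π) s (treeConfig (permGraph π) T s) := by
  classical
  have hc : T.Connected := htree.isConnected
  refine ⟨tc_sink (permGraph π) T s hc, fun i hi => tc_lt (permGraph π) T s hsub hc i hi, ?_⟩
  haveI : Nonempty (Fin n) := hc.nonempty
  haveI hTr : IsTrans (Fin n) (fun a b => nkey T s a ≤ nkey T s b) :=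
    ⟨fun _ _ _ hab hbc => le_trans hab hbc⟩
  haveI hAs : Std.Antisymm (α := Fin n) (fun a b => nkey T s a ≤ nkey T s b) :=
    ⟨fun _ _ hab hba => nkey_inj T s (le_antisymm hab hba)⟩
  haveI hTo : Std.Total (α := Fin n) (fun a b => nkey T s a ≤ nkey T s b) :=
    ⟨fun _ _ => le_total _ _⟩
  set l := Finset.sort Finset.univ (fun a b => nkey T s a ≤ nkey T s b) with hl
  have hsorted : List.Pairwise (fun a b => nkey T s a ≤ nkey T s b) l :=
    Finset.pairwise_sort _ _
  have hnodup : l.Nodup := Finset.sort_nodup _ _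
  have hmem : ∀ v, v ∈ l := fun v => (Finset.mem_sort _).mpr (mem_univ v)
  have hmain := main_ind (permGraph π) T s hsub l ∅ hsorted hnodup (by simp)
    (fun x _ => hmem x)
  have hg0 : gcfg (permGraph π) T s ∅ = treeConfig (permGraph π) T s := by
    funext i
    rw [gcfg, if_neg (Finset.notMem_empty i)]
    simp [nb]
  have hgu : gcfg (permGraph π) T s Finset.univ = treeConfig (permGraph π) T s := by
    funext i
    rw [gcfg, if_pos (mem_univ i)]
    have hnb : nb (permGraph π) Finset.univ i = (permGraph π).degree i := by
      rw [nb, degree_eq_card_filter]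
    rw [hnb]
    omega
  have hhead : l.head? = some s := by
    have hsl : s ∈ l := hmem s
    cases hl' : l with
    | nil => rw [hl'] at hsl; simp at hsl
    | cons x l' =>
        rw [hl'] at hsl hsorted
        rw [List.head?_cons]
        rcases List.mem_cons.mp hsl with h | h
        · exact congrArg some h.symm
        · have h1 : nkey T s x ≤ nkey T s s := List.rel_of_pairwise_cons hsorted h
          by_cases hx : x = s
          · exact congrArg some hx
          · exfalso
            have hds : T.dist s s = 0 := SimpleGraph.dist_self
            have hdx : 0 < T.dist s x := hc.pos_dist_of_ne (fun e => hx e.symm)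
            have h2 : nkey T s s < nkey T s x := nkey_lt_of_dist_lt T s (by omega)
            omega
  rw [hg0, hgu] at hmain
  exact ⟨l, hhead, hnodup, hmem, hmain.1, hmain.2⟩
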